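/- arXiv:1012.5364 — 2 statements merged into one kernel-verified Lean document; each statement's English description precedes it below -/
import Mathlib

section
/- Let N ≥ 1 be an integer, n > max(N−2, 0) a real number, R > 0, K ≥ 0, γ > 1, M > 0, T > 0. Suppose ρ, V : [0,T] × [0,∞) → ℝ are C¹ functions such that: (i) ρ(t,r) ≥ 0 for all t, r; (ii) ρ(t,r) = 0 and V(t,r) = 0 whenever r ≥ R; (iii) for every t ∈ [0,T], α(N)·∫₀^R ρ(t,s) s^{N−1} ds = M; (iv) for each t the map r ↦ ρ(t,r)^{γ−1} is differentiable on (0,R), and for all t ∈ [0,T] and 0 < r < R: ∂ₜV(t,r) + V(t,r)·∂ᵣV(t,r) + (Kγ/(γ−1))·∂ᵣ(ρ(t,r)^{γ−1}) = −α(N)·r^{1−N}·∫₀^r ρ(t,s) s^{N−1} ds. Define H(t) := ∫₀^R r^n V(t,r) dr. Then H is differentiable on [0,T] and satisfies the Riccati differential inequality H′(t) ≥ n(n+1)·H(t)²/(2R^{n+2}) − R^{n−N+2}·M/(n−N+2) for all t ∈ [0,T]. -/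
open Set MeasureTheory intervalIntegral Function

/-- The constant `α(N)`: `α(1) = 1`, `α(2) = 2π`, and
`α(N) = N(N−2)·π^{N/2}/Γ(N/2+1)` for `N ≥ 3`. -/
noncomputable def alphaConst (N : ℕ) : ℝ :=
  if N = 1 then 1
  else if N = 2 then 2 * Real.pi
  else (N : ℝ) * ((N : ℝ) - 2) * Real.pi ^ ((N : ℝ) / 2) / Real.Gamma ((N : ℝ) / 2 + 1)

lemma alphaConst_pos {N : ℕ} (hN : 1 ≤ N) : 0 < alphaConst N := by
  unfold alphaConst
  rcases eq_or_lt_of_le hN with h1 | h1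
  · simp [← h1]
  rcases eq_or_lt_of_le (Nat.succ_le_of_lt h1) with h2 | h2
  · simp [← h2, Real.pi_pos]
  have hN1 : N ≠ 1 := by omega
  have hN2 : N ≠ 2 := by omega
  rw [if_neg hN1, if_neg hN2]
  have hNR : (2:ℝ) < (N:ℝ) := by exact_mod_cast h2
  apply div_pos
  · apply mul_pos (mul_pos (by linarith) (by linarith))
    exact Real.rpow_pos_of_pos Real.pi_pos _
  · exact Real.Gamma_pos_of_pos (by positivity)

lemma ftc_zero_to_R {f f' : ℝ → ℝ} {R : ℝ} (hR : 0 ≤ R)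
    (hcont : ContinuousOn f (Set.Icc 0 R))
    (hderiv : ∀ r ∈ Set.Ioo (0:ℝ) R, HasDerivAt f (f' r) r)
    (hint : IntervalIntegrable f' MeasureTheory.volume 0 R) :
    ∫ r in (0:ℝ)..R, f' r = f R - f 0 :=
  intervalIntegral.integral_eq_sub_of_hasDeriv_right_of_le hR hcont
    (fun x hx => (hderiv x hx).hasDerivWithinAt) hint

lemma cs_sq_le {a b : ℝ → ℝ} {R : ℝ} (hR : 0 ≤ R)
    (hab : IntervalIntegrable (fun r => a r * b r) volume 0 R)
    (ha : IntervalIntegrable (fun r => a r ^ 2) volume 0 R)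
    (hb : IntervalIntegrable (fun r => b r ^ 2) volume 0 R) :
    (∫ r in (0:ℝ)..R, a r * b r) ^ 2
      ≤ (∫ r in (0:ℝ)..R, a r ^ 2) * ∫ r in (0:ℝ)..R, b r ^ 2 := by
  set A := ∫ r in (0:ℝ)..R, a r ^ 2 with hA
  set B := ∫ r in (0:ℝ)..R, a r * b r with hB
  set C := ∫ r in (0:ℝ)..R, b r ^ 2 with hC
  have hCnn : 0 ≤ C := intervalIntegral.integral_nonneg hR (fun u _ => sq_nonneg _)
  have hAnn : 0 ≤ A := intervalIntegral.integral_nonneg hR (fun u _ => sq_nonneg _)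
  have key : (0:ℝ) ≤ ∫ r in (0:ℝ)..R, (C * a r - B * b r) ^ 2 :=
    intervalIntegral.integral_nonneg hR (fun u _ => sq_nonneg _)
  have key2 : ∀ lam : ℝ, (0:ℝ) ≤ ∫ r in (0:ℝ)..R, (a r - lam * b r) ^ 2 :=
    fun lam => intervalIntegral.integral_nonneg hR (fun u _ => sq_nonneg _)
  have expand : (∫ r in (0:ℝ)..R, (C * a r - B * b r) ^ 2)
      = C ^ 2 * A - 2 * C * B * B + B ^ 2 * C := by
    have h1 : ∀ r ∈ Set.uIcc (0:ℝ) R, (fun r => (C * a r - B * b r) ^ 2) r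
        = (fun r => C ^ 2 * a r ^ 2 - 2 * C * B * (a r * b r) + B ^ 2 * b r ^ 2) r := by
      intro r _; ring
    rw [intervalIntegral.integral_congr h1,
      intervalIntegral.integral_add (((ha.const_mul _).sub (hab.const_mul _))) (hb.const_mul _),
      intervalIntegral.integral_sub (ha.const_mul _) (hab.const_mul _),
      intervalIntegral.integral_const_mul, intervalIntegral.integral_const_mul,
      intervalIntegral.integral_const_mul]
  rw [expand] at key
  rcases eq_or_lt_of_le hCnn with hC0 | hC0
  · -- C = 0 : show B = 0
    have expand2 : ∀ lam : ℝ, (∫ r in (0:ℝ)..R, (a r - lam * b r) ^ 2)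
        = A - 2 * lam * B + lam ^ 2 * C := by
      intro lam
      have h1 : ∀ r ∈ Set.uIcc (0:ℝ) R, (fun r => (a r - lam * b r) ^ 2) r
          = (fun r => a r ^ 2 - 2 * lam * (a r * b r) + lam ^ 2 * b r ^ 2) r := by
        intro r _; ring
      rw [intervalIntegral.integral_congr h1,
        intervalIntegral.integral_add ((ha.sub (hab.const_mul _))) ((hb.const_mul _)),
        intervalIntegral.integral_sub ha (hab.const_mul _),
        intervalIntegral.integral_const_mul, intervalIntegral.integral_const_mul]
    have hB0 : B = 0 := by
      by_contra hB0
      have h1 := key2 ((A + 1) / (2 * B))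
      rw [expand2, ← hC0] at h1
      have e : 2 * ((A + 1) / (2 * B)) * B = A + 1 := by field_simp
      nlinarith [h1, e]
    rw [hB0, ← hC0]; simp
  · nlinarith [sq_nonneg B]

lemma intervalIntegrable_of_bound {f bnd : ℝ → ℝ} {R : ℝ} (hR : 0 ≤ R)
    (hf : ContinuousOn f (Set.Ioc 0 R))
    (hbnd : IntervalIntegrable bnd volume 0 R)
    (h : ∀ r ∈ Set.Ioc (0:ℝ) R, |f r| ≤ bnd r) :
    IntervalIntegrable f volume 0 R := by
  rw [intervalIntegrable_iff_integrableOn_Ioc_of_le hR] at hbnd ⊢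
  have hm : AEStronglyMeasurable f (volume.restrict (Set.Ioc 0 R)) :=
    hf.aestronglyMeasurable measurableSet_Ioc
  refine MeasureTheory.Integrable.mono hbnd hm ?_
  rw [MeasureTheory.ae_restrict_iff' measurableSet_Ioc]
  filter_upwards with r hr
  have := h r hr
  rw [Real.norm_eq_abs, Real.norm_eq_abs]
  exact this.trans (le_abs_self _)

lemma ae_ne_real (a : ℝ) : ∀ᵐ x : ℝ ∂volume, x ≠ a := by
  have h : {x : ℝ | ¬ x ≠ a} = {a} := by ext x; simp
  rw [MeasureTheory.ae_iff, h]
  exact measure_singleton a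

lemma integral_congr_Ioo {f g : ℝ → ℝ} {R : ℝ} (hR : 0 ≤ R)
    (h : ∀ r ∈ Set.Ioo (0:ℝ) R, f r = g r) :
    ∫ r in (0:ℝ)..R, f r = ∫ r in (0:ℝ)..R, g r := by
  apply intervalIntegral.integral_congr_ae
  filter_upwards [ae_ne_real R] with x hx hxI
  rw [Set.uIoc_of_le hR] at hxI
  exact h x ⟨hxI.1, lt_of_le_of_ne hxI.2 hx⟩

lemma intervalIntegrable_congr_Ioo {f g : ℝ → ℝ} {R : ℝ} (hR : 0 ≤ R)
    (h : ∀ r ∈ Set.Ioo (0:ℝ) R, f r = g r)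
    (hg : IntervalIntegrable g volume 0 R) :
    IntervalIntegrable f volume 0 R := by
  rw [intervalIntegrable_iff_integrableOn_Ioc_of_le hR] at hg ⊢
  apply hg.congr
  refine (MeasureTheory.ae_restrict_iff' measurableSet_Ioc).2 ?_
  filter_upwards [ae_ne_real R] with x hx hxm
  exact (h x ⟨hxm.1, lt_of_le_of_ne hxm.2 hx⟩).symm

/-- Projection of the plane onto `[0,T] × [0,∞)`. -/
noncomputable def pproj (T : ℝ) (p : ℝ × ℝ) : ℝ × ℝ := (min T (max 0 p.1), max 0 p.2)

lemma pproj_continuous (T : ℝ) : Continuous (pproj T) := by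
  unfold pproj; fun_prop

lemma pproj_mem {T : ℝ} (hT : 0 ≤ T) (p : ℝ × ℝ) :
    pproj T p ∈ Set.Icc 0 T ×ˢ Set.Ici (0:ℝ) := by
  refine ⟨⟨le_min hT (le_max_left _ _), min_le_left _ _⟩, Set.mem_Ici.2 (le_max_left _ _)⟩

lemma pproj_eq_self {T : ℝ} {p : ℝ × ℝ} (hp : p ∈ Set.Icc 0 T ×ˢ Set.Ici (0:ℝ)) :
    pproj T p = p := by
  obtain ⟨⟨h1, h2⟩, h3⟩ := hp
  simp only [pproj, max_eq_right h1, min_eq_right h2, max_eq_right (Set.mem_Ici.1 h3)]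

section Infra
variable {T : ℝ} {V : ℝ → ℝ → ℝ}

/-- Globalized partial-derivative field. -/
noncomputable def pd (T : ℝ) (V : ℝ → ℝ → ℝ) (p : ℝ × ℝ) : ℝ × ℝ →L[ℝ] ℝ :=
  fderivWithin ℝ (uncurry V) (Set.Icc 0 T ×ˢ Set.Ici 0) (pproj T p)

lemma uds (hT : 0 < T) : UniqueDiffOn ℝ (Set.Icc (0:ℝ) T ×ˢ Set.Ici (0:ℝ)) :=
  (uniqueDiffOn_Icc hT).prod (uniqueDiffOn_Ici 0)

variable (hT : 0 < T)
  (hV : ContDiffOn ℝ 1 (uncurry V) (Set.Icc 0 T ×ˢ Set.Ici 0))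
include hT hV

lemma cont_tildeV : Continuous fun p : ℝ × ℝ => uncurry V (pproj T p) :=
  hV.continuousOn.comp_continuous (pproj_continuous T) (pproj_mem hT.le)

lemma cont_pd : Continuous (pd T V) :=
  (hV.continuousOn_fderivWithin (uds hT) le_rfl).comp_continuous
    (pproj_continuous T) (pproj_mem hT.le)

lemma hasFDeriv_pd {p : ℝ × ℝ} (hp : p ∈ Set.Icc 0 T ×ˢ Set.Ici (0:ℝ)) :
    HasFDerivWithinAt (uncurry V) (pd T V p) (Set.Icc 0 T ×ˢ Set.Ici 0) p := by
  have := (hV.differentiableOn one_ne_zero) p hp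
  have h := this.hasFDerivWithinAt
  rwa [show fderivWithin ℝ (uncurry V) (Set.Icc 0 T ×ˢ Set.Ici 0) p = pd T V p by
    rw [pd, pproj_eq_self hp]] at h

lemma hasDerivWithinAt_time {t r : ℝ} (ht : t ∈ Set.Icc (0:ℝ) T) (hr : r ∈ Set.Ici (0:ℝ)) :
    HasDerivWithinAt (fun τ => V τ r) (pd T V (t, r) (1, 0)) (Set.Icc 0 T) t := by
  have hc : HasDerivWithinAt (fun τ : ℝ => (τ, r)) ((1:ℝ), (0:ℝ)) (Set.Icc 0 T) t :=
    (HasDerivAt.prodMk (hasDerivAt_id t) (hasDerivAt_const t r)).hasDerivWithinAt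
  have hmaps : Set.MapsTo (fun τ : ℝ => (τ, r)) (Set.Icc 0 T)
      (Set.Icc 0 T ×ˢ Set.Ici 0) := fun τ hτ => ⟨hτ, hr⟩
  exact (hasFDeriv_pd hT hV ⟨ht, hr⟩).comp_hasDerivWithinAt t hc hmaps

lemma hasDerivAt_time {t r : ℝ} (ht : t ∈ Set.Ioo (0:ℝ) T) (hr : r ∈ Set.Ici (0:ℝ)) :
    HasDerivAt (fun τ => V τ r) (pd T V (t, r) (1, 0)) t :=
  (hasDerivWithinAt_time hT hV (Set.Ioo_subset_Icc_self ht) hr).hasDerivAt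
    (Icc_mem_nhds ht.1 ht.2)

lemma hasDerivAt_space {t r : ℝ} (ht : t ∈ Set.Icc (0:ℝ) T) (hr : 0 < r) :
    HasDerivAt (fun x => V t x) (pd T V (t, r) (0, 1)) r := by
  have hc : HasDerivWithinAt (fun x : ℝ => (t, x)) ((0:ℝ), (1:ℝ)) (Set.Ici 0) r :=
    (HasDerivAt.prodMk (hasDerivAt_const r t) (hasDerivAt_id r)).hasDerivWithinAt
  have hmaps : Set.MapsTo (fun x : ℝ => (t, x)) (Set.Ici 0)
      (Set.Icc 0 T ×ˢ Set.Ici 0) := fun x hx => ⟨ht, hx⟩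
  exact ((hasFDeriv_pd hT hV (Set.mk_mem_prod ht hr.le)).comp_hasDerivWithinAt r hc hmaps).hasDerivAt
    (Ici_mem_nhds hr)

end Infra

set_option maxHeartbeats 1000000 in
/-- For a radially symmetric `C¹` solution of the Euler–Poisson equations with
attractive forces, compactly supported in `[0,R]` and of total mass `M`, the functional
`H(t) = ∫₀^R rⁿ V(t,r) dr` is differentiable on `[0,T]` and satisfies the Riccati
differential inequality `H′(t) ≥ n(n+1)H(t)²/(2R^{n+2}) − R^{n−N+2}M/(n−N+2)`. -/
theorem riccati_inequality_attractive
    (N : ℕ) (hN : 1 ≤ N) (n R K γ M T : ℝ)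
    (hn : max ((N : ℝ) - 2) 0 < n) (hR : 0 < R) (hK : 0 ≤ K) (hγ : 1 < γ)
    (hM : 0 < M) (hT : 0 < T)
    (ρ V : ℝ → ℝ → ℝ)
    (hρC1 : ContDiffOn ℝ 1 (Function.uncurry ρ) (Set.Icc 0 T ×ˢ Set.Ici 0))
    (hVC1 : ContDiffOn ℝ 1 (Function.uncurry V) (Set.Icc 0 T ×ˢ Set.Ici 0))
    (hρnn : ∀ t r, 0 ≤ ρ t r)
    (hsupp : ∀ t r, R ≤ r → ρ t r = 0 ∧ V t r = 0)
    (hmass : ∀ t ∈ Set.Icc (0:ℝ) T,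
      alphaConst N * (∫ s in (0:ℝ)..R, ρ t s * s ^ (N - 1)) = M)
    (hdiffp : ∀ t ∈ Set.Icc (0:ℝ) T, ∀ r ∈ Set.Ioo (0:ℝ) R,
      DifferentiableAt ℝ (fun s => ρ t s ^ (γ - 1)) r)
    (hmom : ∀ t ∈ Set.Icc (0:ℝ) T, ∀ r ∈ Set.Ioo (0:ℝ) R,
      deriv (fun τ => V τ r) t + V t r * deriv (fun s => V t s) r
        + (K * γ / (γ - 1)) * deriv (fun s => ρ t s ^ (γ - 1)) r
      = -(alphaConst N * r ^ ((1:ℝ) - N) * ∫ s in (0:ℝ)..r, ρ t s * s ^ (N - 1))) :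
    DifferentiableOn ℝ (fun t => ∫ r in (0:ℝ)..R, r ^ n * V t r) (Set.Icc 0 T) ∧
    ∀ t ∈ Set.Icc (0:ℝ) T,
      n * (n + 1) * (∫ r in (0:ℝ)..R, r ^ n * V t r) ^ 2 / (2 * R ^ (n + 2))
        - R ^ (n - N + 2) * M / (n - N + 2)
      ≤ derivWithin (fun t => ∫ r in (0:ℝ)..R, r ^ n * V t r) (Set.Icc 0 T) t := by
  have hn0 : 0 < n := lt_of_le_of_lt (le_max_right _ _) hn
  have hnN : (N:ℝ) - 2 < n := lt_of_le_of_lt (le_max_left _ _) hn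
  have hα : 0 < alphaConst N := alphaConst_pos hN
  set Vt : ℝ → ℝ → ℝ := fun t r => pd T V (t,r) (1,0) with hVtdef
  set Vr : ℝ → ℝ → ℝ := fun t r => pd T V (t,r) (0,1) with hVrdef
  set Vg : ℝ → ℝ → ℝ := fun t r => uncurry V (pproj T (t,r)) with hVgdef
  set H : ℝ → ℝ := fun t => ∫ r in (0:ℝ)..R, r ^ n * V t r with hHdef
  set w : ℝ → ℝ := fun t => ∫ r in (0:ℝ)..R, r ^ n * Vt t r with hwdef
  set Hg : ℝ → ℝ := fun t => ∫ r in (0:ℝ)..R, r ^ n * Vg t r with hHgdef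
  have hrpow : Continuous fun r : ℝ => r ^ n := by
    rw [continuous_iff_continuousAt]
    exact fun x => Real.continuousAt_rpow_const x n (Or.inr hn0.le)
  have contVg : Continuous fun p : ℝ × ℝ => Vg p.1 p.2 := cont_tildeV hT hVC1
  have contVt : Continuous fun p : ℝ × ℝ => Vt p.1 p.2 := by
    exact ((cont_pd hT hVC1)).clm_apply continuous_const
  have contVr : Continuous fun p : ℝ × ℝ => Vr p.1 p.2 := by
    exact ((cont_pd hT hVC1)).clm_apply continuous_const
  have VgV : ∀ t ∈ Set.Icc (0:ℝ) T, ∀ r ∈ Set.Ici (0:ℝ), Vg t r = V t r := by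
    intro t ht r hr
    simp only [hVgdef]
    rw [pproj_eq_self (Set.mk_mem_prod ht hr)]
    rfl
  have HHg : ∀ t ∈ Set.Icc (0:ℝ) T, H t = Hg t := by
    intro t ht
    refine intervalIntegral.integral_congr fun r hr => ?_
    rw [Set.uIcc_of_le hR.le] at hr
    rw [VgV t ht r (Set.mem_Ici.2 hr.1)]
  have contHg : Continuous Hg := by
    apply intervalIntegral.continuous_parametric_intervalIntegral_of_continuous'
      (f := fun t r => r ^ n * Vg t r)
    exact (hrpow.comp continuous_snd).mul contVg
  have contw : Continuous w := by
    apply intervalIntegral.continuous_parametric_intervalIntegral_of_continuous'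
      (f := fun t r => r ^ n * Vt t r)
    exact (hrpow.comp continuous_snd).mul contVt
  -- derivative of Hg at interior points
  have key1 : ∀ t ∈ Set.Ioo (0:ℝ) T, HasDerivAt Hg (w t) t := by
    intro t ht
    obtain ⟨ht0, htT⟩ := ht
    set ε := min t (T - t) with hεdef
    have hε0 : 0 < ε := lt_min ht0 (by linarith)
    have hε1 : ε ≤ t := min_le_left _ _
    have hε2 : ε ≤ T - t := min_le_right _ _
    have hball : Metric.ball t ε ⊆ Set.Ioo 0 T := by
      intro x hx
      rw [Metric.mem_ball, Real.dist_eq] at hx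
      have h1 := abs_lt.1 hx
      exact ⟨by linarith [h1.1], by linarith [h1.2]⟩
    obtain ⟨C, hC⟩ := IsCompact.exists_bound_of_continuousOn
      ((isCompact_Icc (a := t - ε) (b := t + ε)).prod (isCompact_Icc (a := (0:ℝ)) (b := R)))
      (((hrpow.comp continuous_snd).mul contVt).continuousOn)
    have main := intervalIntegral.hasDerivAt_integral_of_dominated_loc_of_deriv_le
      (F := fun x r => r ^ n * Vg x r) (F' := fun x r => r ^ n * Vt x r)
      (x₀ := t) (a := 0) (b := R) (bound := fun _ => C) (μ := volume) (s := Metric.ball t ε) (Metric.ball_mem_nhds t hε0)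
      (Filter.Eventually.of_forall fun x =>
        (((hrpow.comp continuous_snd).mul contVg).comp (Continuous.prodMk_right x)).aestronglyMeasurable)
      (((hrpow.mul (contVg.comp (Continuous.prodMk_right t)))).intervalIntegrable 0 R)
      (((hrpow.mul (contVt.comp (Continuous.prodMk_right t)))).aestronglyMeasurable)
      (Filter.Eventually.of_forall fun r hr x hx => by
        have hr' : r ∈ Set.Ioc (0:ℝ) R := by rwa [Set.uIoc_of_le hR.le] at hr
        have hx' : x ∈ Set.Icc (t - ε) (t + ε) := by
          rw [Metric.mem_ball, Real.dist_eq] at hx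
          have := abs_lt.1 hx
          exact ⟨by linarith [this.1], by linarith [this.2]⟩
        exact hC (x, r) ⟨hx', ⟨hr'.1.le, hr'.2⟩⟩)
      (intervalIntegrable_const)
      (Filter.Eventually.of_forall fun r hr x hx => by
        have hr' : r ∈ Set.Ioc (0:ℝ) R := by rwa [Set.uIoc_of_le hR.le] at hr
        have hxIoo := hball hx
        have hd : HasDerivAt (fun τ => V τ r) (Vt x r) x :=
          hasDerivAt_time hT hVC1 hxIoo (Set.mem_Ici.2 hr'.1.le)
        have hev : (fun τ => Vg τ r) =ᶠ[nhds x] (fun τ => V τ r) := by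
          filter_upwards [Ioo_mem_nhds hxIoo.1 hxIoo.2] with τ hτ
          exact VgV τ (Set.Ioo_subset_Icc_self hτ) r (Set.mem_Ici.2 hr'.1.le)
        exact (hd.congr_of_eventuallyEq hev).const_mul (r ^ n))
    exact main.2
  -- FTC representation
  have key2 : ∀ t ∈ Set.Icc (0:ℝ) T, Hg t = Hg 0 + ∫ τ in (0:ℝ)..t, w τ := by
    intro t ht
    have := intervalIntegral.integral_eq_sub_of_hasDeriv_right_of_le ht.1
      (contHg.continuousOn) (fun τ hτ => (key1 τ ⟨hτ.1, lt_of_lt_of_le hτ.2 ht.2⟩).hasDerivWithinAt.mono (fun x _ => trivial))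
      (contw.intervalIntegrable 0 t)
    linarith [this]
  have key3 : ∀ t ∈ Set.Icc (0:ℝ) T, HasDerivWithinAt H (w t) (Set.Icc 0 T) t := by
    intro t ht
    have hG : HasDerivAt (fun u => Hg 0 + ∫ τ in (0:ℝ)..u, w τ) (w t) t :=
      ((contw.integral_hasStrictDerivAt 0 t).hasDerivAt).const_add (Hg 0)
    refine (hG.hasDerivWithinAt).congr (fun u hu => ?_) ?_
    · rw [HHg u hu, key2 u hu]
    · rw [HHg t ht, key2 t ht]
  -- interior Riccati inequality
  have keyineq : ∀ t ∈ Set.Ioo (0:ℝ) T,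
      n * (n + 1) * (Hg t) ^ 2 / (2 * R ^ (n + 2)) - R ^ (n - N + 2) * M / (n - N + 2)
        ≤ w t := by
    intro t htoo
    have ht : t ∈ Set.Icc (0:ℝ) T := Set.Ioo_subset_Icc_self htoo
    set c : ℝ := K * γ / (γ - 1) with hcdef
    have hc : 0 ≤ c := div_nonneg (mul_nonneg hK (by linarith)) (by linarith)
    set g : ℝ → ℝ := fun r => ∫ s in (0:ℝ)..r, ρ t s * s ^ (N - 1) with hgdef
    set Pr : ℝ → ℝ := fun r => deriv (fun s => ρ t s ^ (γ - 1)) r with hPrdef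
    have contρ : ContinuousOn (fun r => ρ t r) (Set.Ici 0) :=
      hρC1.continuousOn.comp (Continuous.continuousOn (by fun_prop))
        (fun r hr => Set.mk_mem_prod ht hr)
    have contρ' : ContinuousOn (fun s => ρ t s * s ^ (N - 1)) (Set.Icc 0 R) :=
      (contρ.mono Set.Icc_subset_Ici_self).mul (continuous_pow _).continuousOn
    have hgint : IntervalIntegrable (fun s => ρ t s * s ^ (N - 1)) volume 0 R :=
      ContinuousOn.intervalIntegrable (by rwa [Set.uIcc_of_le hR.le])
    have gcont : ContinuousOn g (Set.Icc 0 R) := by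
      have := intervalIntegral.continuousOn_primitive_interval (a := (0:ℝ)) (b := R)
        (μ := volume) (f := fun s => ρ t s * s ^ (N - 1)) ?_
      · rwa [Set.uIcc_of_le hR.le] at this
      · rw [Set.uIcc_of_le hR.le]
        exact contρ'.integrableOn_compact isCompact_Icc
    have gnonneg : ∀ r ∈ Set.Icc (0:ℝ) R, 0 ≤ g r := fun r hr =>
      intervalIntegral.integral_nonneg hr.1
        (fun s hs => mul_nonneg (hρnn t s) (pow_nonneg hs.1 _))
    have gR : g R = M / alphaConst N := by
      have h := hmass t ht
      rw [eq_div_iff hα.ne']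
      rw [show g R = ∫ s in (0:ℝ)..R, ρ t s * s ^ (N - 1) from rfl]
      linarith [h]
    have gle : ∀ r ∈ Set.Icc (0:ℝ) R, g r ≤ M / alphaConst N := by
      intro r hr
      rw [← gR]
      have h1 : IntervalIntegrable (fun s => ρ t s * s ^ (N - 1)) volume 0 r := by
        apply hgint.mono_set
        rw [Set.uIcc_of_le hr.1, Set.uIcc_of_le hR.le]
        exact Set.Icc_subset_Icc le_rfl hr.2
      have h2 : IntervalIntegrable (fun s => ρ t s * s ^ (N - 1)) volume r R := by
        apply hgint.mono_set
        rw [Set.uIcc_of_le hr.2, Set.uIcc_of_le hR.le]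
        exact Set.Icc_subset_Icc hr.1 le_rfl
      have hadd := intervalIntegral.integral_add_adjacent_intervals h1 h2
      have hpos : 0 ≤ ∫ s in r..R, ρ t s * s ^ (N - 1) :=
        intervalIntegral.integral_nonneg hr.2
          (fun s hs => mul_nonneg (hρnn t s) (pow_nonneg (le_trans hr.1 hs.1) _))
      have e1 : g r = ∫ s in (0:ℝ)..r, ρ t s * s ^ (N - 1) := rfl
      have e2 : g R = ∫ s in (0:ℝ)..R, ρ t s * s ^ (N - 1) := rfl
      rw [e1, e2]
      linarith [hadd, hpos]
    have contVt1 : Continuous fun r => Vt t r := contVt.comp (Continuous.prodMk_right t)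
    have contVr1 : Continuous fun r => Vr t r := contVr.comp (Continuous.prodMk_right t)
    have contVg1 : Continuous fun r => Vg t r := contVg.comp (Continuous.prodMk_right t)
    -- the momentum equation, rewritten
    have F1 : ∀ r ∈ Set.Ioo (0:ℝ) R, Vt t r
        = -(Vg t r * Vr t r) - c * Pr r - alphaConst N * r ^ ((1:ℝ) - N) * g r := by
      intro r hr
      have h := hmom t ht r hr
      have e1 : deriv (fun τ => V τ r) t = Vt t r :=
        (hasDerivAt_time hT hVC1 htoo (le_of_lt hr.1)).deriv
      have e2 : deriv (fun s => V t s) r = Vr t r :=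
        (hasDerivAt_space hT hVC1 ht hr.1).deriv
      have e3 : Vg t r = V t r := VgV t ht r (le_of_lt hr.1)
      rw [e1, e2] at h
      rw [e3]
      rw [show g r = ∫ s in (0:ℝ)..r, ρ t s * s ^ (N - 1) from rfl]
      rw [show c = K * γ / (γ - 1) from rfl]
      rw [show Pr r = deriv (fun s => ρ t s ^ (γ - 1)) r from rfl]
      linarith [h]
    -- compact bounds
    obtain ⟨C1, hC1⟩ := IsCompact.exists_bound_of_continuousOn (isCompact_Icc (a := (0:ℝ)) (b := R))
      ((contVg1.pow 2).continuousOn)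
    have contρpow : ContinuousOn (fun r => ρ t r ^ (γ - 1)) (Set.Icc 0 R) :=
      (contρ.mono Set.Icc_subset_Ici_self).rpow_const (fun x _ => Or.inr (by linarith))
    obtain ⟨C2, hC2⟩ := IsCompact.exists_bound_of_continuousOn (isCompact_Icc (a := (0:ℝ)) (b := R))
      contρpow
    -- integrability of the power weights
    have hint1 : IntervalIntegrable (fun r : ℝ => r ^ (n - 1)) volume 0 R :=
      intervalIntegral.intervalIntegrable_rpow' (by linarith)
    have hint2 : IntervalIntegrable (fun r : ℝ => r ^ (n + 1 - (N:ℝ))) volume 0 R :=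
      intervalIntegral.intervalIntegrable_rpow' (by linarith)
    have cpow1 : ContinuousOn (fun r : ℝ => r ^ (n - 1)) (Set.Ioc (0:ℝ) R) :=
      fun r hr => (Real.continuousAt_rpow_const r (n - 1) (Or.inl hr.1.ne')).continuousWithinAt
    have cpowN : ContinuousOn (fun r : ℝ => r ^ ((1:ℝ) - (N:ℝ))) (Set.Ioc (0:ℝ) R) :=
      fun r hr => (Real.continuousAt_rpow_const r _ (Or.inl hr.1.ne')).continuousWithinAt
    -- integrability of all integrands
    have hq1 : IntervalIntegrable (fun r => r ^ n * Vt t r) volume 0 R :=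
      (hrpow.mul contVt1).intervalIntegrable 0 R
    have hq2 : IntervalIntegrable (fun r => r ^ n * (Vg t r * Vr t r)) volume 0 R :=
      (hrpow.mul (contVg1.mul contVr1)).intervalIntegrable 0 R
    have hq5 : IntervalIntegrable (fun r => r ^ (n - 1) * (Vg t r) ^ 2) volume 0 R := by
      apply intervalIntegrable_of_bound (f := fun r => r ^ (n - 1) * (Vg t r) ^ 2) hR.le (cpow1.mul (contVg1.pow 2).continuousOn)
        (hint1.const_mul C1)
      intro r hr
      have h1 : (0:ℝ) ≤ r ^ (n - 1) := Real.rpow_nonneg hr.1.le _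
      have h2 := hC1 r ⟨hr.1.le, hr.2⟩
      rw [Real.norm_eq_abs, abs_of_nonneg (sq_nonneg _)] at h2
      rw [abs_mul, abs_of_nonneg h1, abs_of_nonneg (sq_nonneg _)]
      calc r ^ (n - 1) * (Vg t r) ^ 2 ≤ r ^ (n - 1) * C1 :=
            mul_le_mul_of_nonneg_left h2 h1
        _ = C1 * r ^ (n - 1) := mul_comm _ _
    have hq6 : IntervalIntegrable (fun r => r ^ (n - 1) * ρ t r ^ (γ - 1)) volume 0 R := by
      apply intervalIntegrable_of_bound (f := fun r => r ^ (n - 1) * ρ t r ^ (γ - 1)) hR.le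
        (cpow1.mul (contρpow.mono Set.Ioc_subset_Icc_self)) (hint1.const_mul C2)
      intro r hr
      have h1 : (0:ℝ) ≤ r ^ (n - 1) := Real.rpow_nonneg hr.1.le _
      have h1' : (0:ℝ) ≤ ρ t r ^ (γ - 1) := Real.rpow_nonneg (hρnn t r) _
      have h2 := hC2 r ⟨hr.1.le, hr.2⟩
      rw [Real.norm_eq_abs, abs_of_nonneg h1'] at h2
      rw [abs_mul, abs_of_nonneg h1, abs_of_nonneg h1']
      calc r ^ (n - 1) * ρ t r ^ (γ - 1) ≤ r ^ (n - 1) * C2 :=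
            mul_le_mul_of_nonneg_left h2 h1
        _ = C2 * r ^ (n - 1) := mul_comm _ _
    -- pointwise bound for the gravity term
    have hb3 : ∀ r ∈ Set.Ioc (0:ℝ) R,
        r ^ n * (alphaConst N * r ^ ((1:ℝ) - N) * g r) ≤ M * r ^ (n + 1 - (N:ℝ))
          ∧ 0 ≤ r ^ n * (alphaConst N * r ^ ((1:ℝ) - N) * g r) := by
      intro r hr
      have hrpos : 0 < r := hr.1
      have h1 : (0:ℝ) ≤ r ^ n := Real.rpow_nonneg hrpos.le _
      have h2 : (0:ℝ) ≤ r ^ ((1:ℝ) - (N:ℝ)) := Real.rpow_nonneg hrpos.le _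
      have h3 : 0 ≤ g r := gnonneg r ⟨hrpos.le, hr.2⟩
      have h4 : g r ≤ M / alphaConst N := gle r ⟨hrpos.le, hr.2⟩
      constructor
      · have step : alphaConst N * r ^ ((1:ℝ) - (N:ℝ)) * g r
            ≤ alphaConst N * r ^ ((1:ℝ) - (N:ℝ)) * (M / alphaConst N) :=
          mul_le_mul_of_nonneg_left h4 (mul_nonneg hα.le h2)
        have e : alphaConst N * r ^ ((1:ℝ) - (N:ℝ)) * (M / alphaConst N)
            = M * r ^ ((1:ℝ) - (N:ℝ)) := by field_simp
        have e2 : r ^ n * (M * r ^ ((1:ℝ) - (N:ℝ))) = M * r ^ (n + 1 - (N:ℝ)) := by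
          rw [show r ^ n * (M * r ^ ((1:ℝ) - (N:ℝ))) = M * (r ^ n * r ^ ((1:ℝ) - (N:ℝ))) from
            by ring, ← Real.rpow_add hrpos, show n + ((1:ℝ) - (N:ℝ)) = n + 1 - (N:ℝ) from by ring]
        calc r ^ n * (alphaConst N * r ^ ((1:ℝ) - N) * g r)
            ≤ r ^ n * (M * r ^ ((1:ℝ) - (N:ℝ))) := by
              rw [← e]; exact mul_le_mul_of_nonneg_left step h1
          _ = M * r ^ (n + 1 - (N:ℝ)) := e2
      · exact mul_nonneg h1 (mul_nonneg (mul_nonneg hα.le h2) h3)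
    have hq3 : IntervalIntegrable
        (fun r => r ^ n * (alphaConst N * r ^ ((1:ℝ) - N) * g r)) volume 0 R := by
      apply intervalIntegrable_of_bound
        (f := fun r => r ^ n * (alphaConst N * r ^ ((1:ℝ) - N) * g r)) hR.le
        (hrpow.continuousOn.mul ((continuousOn_const.mul cpowN).mul
          (gcont.mono Set.Ioc_subset_Icc_self))) (hint2.const_mul M)
      intro r hr
      rw [abs_of_nonneg (hb3 r hr).2]
      exact (hb3 r hr).1
    have hq4 : IntervalIntegrable (fun r => r ^ n * (c * Pr r)) volume 0 R := by
      apply intervalIntegrable_congr_Ioo hR.le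
        (g := fun r => -(r ^ n * Vt t r) - r ^ n * (Vg t r * Vr t r)
          - r ^ n * (alphaConst N * r ^ ((1:ℝ) - N) * g r)) ?_ ((hq1.neg.sub hq2).sub hq3)
      intro r hr
      have h := F1 r hr
      linear_combination r ^ n * h
    -- integration by parts for the kinetic term
    have hVgR : Vg t R = 0 := by
      rw [VgV t ht R (Set.mem_Ici.2 hR.le)]; exact (hsupp t R le_rfl).2
    have hzn : (0:ℝ) ^ n = 0 := Real.zero_rpow hn0.ne'
    have ibp1 : (∫ r in (0:ℝ)..R,
        (n / 2 * (r ^ (n - 1) * (Vg t r) ^ 2) + r ^ n * (Vg t r * Vr t r))) = 0 := by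
      have hder : ∀ r ∈ Set.Ioo (0:ℝ) R, HasDerivAt (fun x => x ^ n * (Vg t x) ^ 2 / 2)
          (n / 2 * (r ^ (n - 1) * (Vg t r) ^ 2) + r ^ n * (Vg t r * Vr t r)) r := by
        intro r hr
        have h1 : HasDerivAt (fun x : ℝ => x ^ n) (n * r ^ (n - 1)) r :=
          Real.hasDerivAt_rpow_const (Or.inl hr.1.ne')
        have hdV : HasDerivAt (fun x => V t x) (Vr t r) r := hasDerivAt_space hT hVC1 ht hr.1
        have hev : (fun x => Vg t x) =ᶠ[nhds r] (fun x => V t x) := by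
          filter_upwards [Ioi_mem_nhds hr.1] with x hx
          exact VgV t ht x (Set.mem_Ici.2 (le_of_lt hx))
        have h2 : HasDerivAt (fun x => Vg t x) (Vr t r) r := hdV.congr_of_eventuallyEq hev
        have h3 : HasDerivAt (fun x => x ^ n * (Vg t x) ^ 2 / 2)
            ((n * r ^ (n - 1) * (Vg t r) ^ 2 + r ^ n * (((2:ℕ):ℝ) * Vg t r ^ (2 - 1) * Vr t r)) / 2) r :=
          (h1.mul (h2.pow 2)).div_const 2
        convert h3 using 1
        ring
      have hcont : ContinuousOn (fun x : ℝ => x ^ n * (Vg t x) ^ 2 / 2) (Set.Icc 0 R) :=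
        ((hrpow.mul (contVg1.pow 2)).div_const 2).continuousOn
      have hftc := ftc_zero_to_R hR.le hcont hder ((hq5.const_mul (n / 2)).add hq2)
      rw [hVgR, hzn] at hftc
      simpa using hftc
    have E2 : (∫ r in (0:ℝ)..R, r ^ n * (Vg t r * Vr t r))
        = -(n / 2 * ∫ r in (0:ℝ)..R, r ^ (n - 1) * (Vg t r) ^ 2) := by
      rw [intervalIntegral.integral_add (hq5.const_mul (n / 2)) hq2,
        intervalIntegral.integral_const_mul] at ibp1
      linarith
    -- the pressure term has a sign
    have Ppart : (∫ r in (0:ℝ)..R, r ^ n * (c * Pr r)) ≤ 0 := by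
      rcases eq_or_lt_of_le hK with hK0 | hK0
      · have hzero : ∀ r : ℝ, r ^ n * (c * Pr r) = 0 := by
          intro r
          rw [hcdef, ← hK0]
          simp
        have h0 : (∫ r in (0:ℝ)..R, r ^ n * (c * Pr r)) = ∫ r in (0:ℝ)..R, (0:ℝ) :=
          intervalIntegral.integral_congr (fun r _ => hzero r)
        rw [h0]
        simp
      · have hcpos : 0 < c := by
          rw [hcdef]; exact div_pos (mul_pos hK0 (by linarith)) (by linarith)
        have hPrint : IntervalIntegrable (fun r => r ^ n * Pr r) volume 0 R := by
          have h := hq4.const_mul (1 / c)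
          have e : (fun r => (1 / c) * (r ^ n * (c * Pr r))) = fun r => r ^ n * Pr r := by
            funext r; field_simp
          rwa [e] at h
        have ibp2 : (∫ r in (0:ℝ)..R,
            (n * (r ^ (n - 1) * ρ t r ^ (γ - 1)) + r ^ n * Pr r)) = 0 := by
          have hder : ∀ r ∈ Set.Ioo (0:ℝ) R, HasDerivAt (fun x => x ^ n * ρ t x ^ (γ - 1))
              (n * (r ^ (n - 1) * ρ t r ^ (γ - 1)) + r ^ n * Pr r) r := by
            intro r hr
            have h1 : HasDerivAt (fun x : ℝ => x ^ n) (n * r ^ (n - 1)) r :=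
              Real.hasDerivAt_rpow_const (Or.inl hr.1.ne')
            have h2 : HasDerivAt (fun x => ρ t x ^ (γ - 1)) (Pr r) r :=
              (hdiffp t ht r hr).hasDerivAt
            have h3 : HasDerivAt (fun x => x ^ n * ρ t x ^ (γ - 1))
                (n * r ^ (n - 1) * ρ t r ^ (γ - 1) + r ^ n * Pr r) r := h1.mul h2
            convert h3 using 1
            ring
          have hftc := ftc_zero_to_R (f := fun x => x ^ n * ρ t x ^ (γ - 1)) hR.le (hrpow.continuousOn.mul contρpow) hder
            ((hq6.const_mul n).add hPrint)
          rw [show ρ t R = 0 from (hsupp t R le_rfl).1, hzn,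
            Real.zero_rpow (show γ - 1 ≠ 0 by linarith)] at hftc
          simpa using hftc
        have hq6nn : 0 ≤ ∫ r in (0:ℝ)..R, r ^ (n - 1) * ρ t r ^ (γ - 1) :=
          intervalIntegral.integral_nonneg hR.le
            (fun u hu => mul_nonneg (Real.rpow_nonneg hu.1 _) (Real.rpow_nonneg (hρnn t u) _))
        have hsplit : (∫ r in (0:ℝ)..R, r ^ n * Pr r)
            = -(n * ∫ r in (0:ℝ)..R, r ^ (n - 1) * ρ t r ^ (γ - 1)) := by
          rw [intervalIntegral.integral_add (hq6.const_mul n) hPrint,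
            intervalIntegral.integral_const_mul] at ibp2
          linarith
        have e : (fun r => r ^ n * (c * Pr r)) = fun r => c * (r ^ n * Pr r) := by
          funext r; ring
        rw [e, intervalIntegral.integral_const_mul, hsplit]
        have hnn : 0 ≤ n * ∫ r in (0:ℝ)..R, r ^ (n - 1) * ρ t r ^ (γ - 1) :=
          mul_nonneg hn0.le hq6nn
        exact mul_nonpos_of_nonneg_of_nonpos hc (by linarith)
    -- gravity bound
    have Gpart : (∫ r in (0:ℝ)..R, r ^ n * (alphaConst N * r ^ ((1:ℝ) - N) * g r))
        ≤ R ^ (n - (N:ℝ) + 2) * M / (n - (N:ℝ) + 2) := by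
      have hmono : (∫ r in (0:ℝ)..R, r ^ n * (alphaConst N * r ^ ((1:ℝ) - N) * g r))
          ≤ ∫ r in (0:ℝ)..R, M * r ^ (n + 1 - (N:ℝ)) := by
        apply intervalIntegral.integral_mono_on hR.le hq3 (hint2.const_mul M)
        intro r hr
        rcases eq_or_lt_of_le hr.1 with h0 | h0
        · rw [← h0]
          simp only [hzn, zero_mul]
          positivity
        · exact (hb3 r ⟨h0, hr.2⟩).1
      calc (∫ r in (0:ℝ)..R, r ^ n * (alphaConst N * r ^ ((1:ℝ) - N) * g r))
          ≤ ∫ r in (0:ℝ)..R, M * r ^ (n + 1 - (N:ℝ)) := hmono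
        _ = M * ((R ^ (n + 1 - (N:ℝ) + 1) - (0:ℝ) ^ (n + 1 - (N:ℝ) + 1)) / (n + 1 - (N:ℝ) + 1)) := by
            rw [intervalIntegral.integral_const_mul, integral_rpow (Or.inl (by linarith))]
        _ = R ^ (n - (N:ℝ) + 2) * M / (n - (N:ℝ) + 2) := by
            rw [Real.zero_rpow (show n + 1 - (N:ℝ) + 1 ≠ 0 by intro h; linarith),
              show n + 1 - (N:ℝ) + 1 = n - (N:ℝ) + 2 from by ring]
            ring
    -- Cauchy–Schwarz
    have csA : (Hg t) ^ 2 * (n + 2)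
        ≤ (∫ r in (0:ℝ)..R, r ^ (n - 1) * (Vg t r) ^ 2) * R ^ (n + 2) := by
      have hbig : Continuous fun r : ℝ => r ^ (n + 1) := by
        rw [continuous_iff_continuousAt]
        exact fun x => Real.continuousAt_rpow_const x _ (Or.inr (by linarith))
      have hab : IntervalIntegrable
          (fun r => (r ^ ((n - 1) / 2) * Vg t r) * r ^ ((n + 1) / 2)) volume 0 R := by
        apply intervalIntegrable_congr_Ioo hR.le (g := fun r => r ^ n * Vg t r) ?_
          ((hrpow.mul contVg1).intervalIntegrable 0 R)
        intro r hr
        rw [show (r ^ ((n - 1) / 2) * Vg t r) * r ^ ((n + 1) / 2)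
          = (r ^ ((n - 1) / 2) * r ^ ((n + 1) / 2)) * Vg t r from by ring,
          ← Real.rpow_add hr.1, show (n - 1) / 2 + (n + 1) / 2 = n from by ring]
      have ha2 : IntervalIntegrable
          (fun r => (r ^ ((n - 1) / 2) * Vg t r) ^ 2) volume 0 R := by
        apply intervalIntegrable_congr_Ioo hR.le
          (g := fun r => r ^ (n - 1) * (Vg t r) ^ 2) ?_ hq5
        intro r hr
        rw [show (r ^ ((n - 1) / 2) * Vg t r) ^ 2
          = (r ^ ((n - 1) / 2) * r ^ ((n - 1) / 2)) * (Vg t r) ^ 2 from by ring,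
          ← Real.rpow_add hr.1, show (n - 1) / 2 + (n - 1) / 2 = n - 1 from by ring]
      have hb2 : IntervalIntegrable (fun r => (r ^ ((n + 1) / 2)) ^ 2) volume 0 R := by
        apply intervalIntegrable_congr_Ioo hR.le (g := fun r => r ^ (n + 1)) ?_
          (hbig.intervalIntegrable 0 R)
        intro r hr
        rw [show (r ^ ((n + 1) / 2)) ^ 2 = r ^ ((n + 1) / 2) * r ^ ((n + 1) / 2) from sq _,
          ← Real.rpow_add hr.1, show (n + 1) / 2 + (n + 1) / 2 = n + 1 from by ring]
      have hcs := cs_sq_le hR.le hab ha2 hb2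
      have e1 : (∫ r in (0:ℝ)..R, (r ^ ((n - 1) / 2) * Vg t r) * r ^ ((n + 1) / 2)) = Hg t := by
        apply integral_congr_Ioo hR.le (g := fun r => r ^ n * Vg t r)
        intro r hr
        rw [show (r ^ ((n - 1) / 2) * Vg t r) * r ^ ((n + 1) / 2)
          = (r ^ ((n - 1) / 2) * r ^ ((n + 1) / 2)) * Vg t r from by ring,
          ← Real.rpow_add hr.1, show (n - 1) / 2 + (n + 1) / 2 = n from by ring]
      have e2 : (∫ r in (0:ℝ)..R, (r ^ ((n - 1) / 2) * Vg t r) ^ 2)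
          = ∫ r in (0:ℝ)..R, r ^ (n - 1) * (Vg t r) ^ 2 := by
        apply integral_congr_Ioo hR.le
        intro r hr
        rw [show (r ^ ((n - 1) / 2) * Vg t r) ^ 2
          = (r ^ ((n - 1) / 2) * r ^ ((n - 1) / 2)) * (Vg t r) ^ 2 from by ring,
          ← Real.rpow_add hr.1, show (n - 1) / 2 + (n - 1) / 2 = n - 1 from by ring]
      have e3 : (∫ r in (0:ℝ)..R, (r ^ ((n + 1) / 2)) ^ 2) = R ^ (n + 2) / (n + 2) := by
        have e3a : (∫ r in (0:ℝ)..R, (r ^ ((n + 1) / 2)) ^ 2)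
            = ∫ r in (0:ℝ)..R, r ^ (n + 1) := by
          apply integral_congr_Ioo hR.le
          intro r hr
          rw [show (r ^ ((n + 1) / 2)) ^ 2 = r ^ ((n + 1) / 2) * r ^ ((n + 1) / 2) from sq _,
            ← Real.rpow_add hr.1, show (n + 1) / 2 + (n + 1) / 2 = n + 1 from by ring]
        rw [e3a, integral_rpow (Or.inl (by linarith)),
          show n + 1 + 1 = n + 2 from by ring,
          Real.zero_rpow (show n + 2 ≠ 0 by intro h; linarith)]
        ring
      rw [e1, e2, e3] at hcs
      have hn2 : (0:ℝ) < n + 2 := by linarith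
      exact (le_div_iff₀ hn2).1 (by rwa [← mul_div_assoc] at hcs)
    -- assembling everything
    have split : w t = -(∫ r in (0:ℝ)..R, r ^ n * (Vg t r * Vr t r))
        - (∫ r in (0:ℝ)..R, r ^ n * (c * Pr r))
        - (∫ r in (0:ℝ)..R, r ^ n * (alphaConst N * r ^ ((1:ℝ) - N) * g r)) := by
      have e : ∀ r ∈ Set.Ioo (0:ℝ) R, r ^ n * Vt t r
          = (-(r ^ n * (Vg t r * Vr t r)) - r ^ n * (c * Pr r))
            - r ^ n * (alphaConst N * r ^ ((1:ℝ) - N) * g r) := by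
        intro r hr
        have h := F1 r hr
        linear_combination r ^ n * h
      have e0 : w t = ∫ r in (0:ℝ)..R, r ^ n * Vt t r := rfl
      have hq2' : IntervalIntegrable (fun r => -(r ^ n * (Vg t r * Vr t r))) volume 0 R := hq2.neg
      have hq24 : IntervalIntegrable
          (fun r => -(r ^ n * (Vg t r * Vr t r)) - r ^ n * (c * Pr r)) volume 0 R := hq2'.sub hq4
      rw [e0, integral_congr_Ioo hR.le e,
        intervalIntegral.integral_sub hq24 hq3,
        intervalIntegral.integral_sub hq2' hq4, intervalIntegral.integral_neg]
    have hq5nn : 0 ≤ ∫ r in (0:ℝ)..R, r ^ (n - 1) * (Vg t r) ^ 2 :=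
      intervalIntegral.integral_nonneg hR.le
        (fun u hu => mul_nonneg (Real.rpow_nonneg hu.1 _) (sq_nonneg _))
    have hP : (0:ℝ) < R ^ (n + 2) := Real.rpow_pos_of_pos hR _
    rw [split, E2]
    have hfin : n * (n + 1) * (Hg t) ^ 2 / (2 * R ^ (n + 2))
        ≤ n / 2 * ∫ r in (0:ℝ)..R, r ^ (n - 1) * (Vg t r) ^ 2 := by
      rw [div_le_iff₀ (by positivity)]
      have h1 := mul_le_mul_of_nonneg_left csA hn0.le
      nlinarith [sq_nonneg (Hg t), hn0.le, hq5nn, hP.le,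
        mul_nonneg hn0.le (sq_nonneg (Hg t))]
    linarith [Ppart, Gpart, hfin]
  constructor
  · exact fun t ht => (key3 t ht).differentiableWithinAt
  · intro t ht
    have hdw : derivWithin H (Set.Icc 0 T) t = w t :=
      (key3 t ht).derivWithin ((uniqueDiffOn_Icc hT) t ht)
    have h1 : (∫ r in (0:ℝ)..R, r ^ n * V t r) = Hg t := HHg t ht
    rw [h1, hdw]
    -- closure argument
    set Φ : ℝ → ℝ := fun u => w u -
      (n * (n + 1) * (Hg u) ^ 2 / (2 * R ^ (n + 2)) - R ^ (n - N + 2) * M / (n - N + 2))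
      with hΦdef
    have contΦ : Continuous Φ := by
      apply contw.sub
      apply Continuous.sub
      · exact (((continuous_const.mul (contHg.pow 2))).div_const _)
      · exact continuous_const
    have hsub : Set.Icc (0:ℝ) T ⊆ {u | 0 ≤ Φ u} := by
      rw [← closure_Ioo hT.ne]
      refine closure_minimal (fun u hu => ?_) (isClosed_le continuous_const contΦ)
      have := keyineq u hu
      simp only [Set.mem_setOf_eq, hΦdef]
      linarith
    have := hsub ht
    simp only [Set.mem_setOf_eq, hΦdef] at this
    linarith
end

section
/- Let N ≥ 1 be an integer, n > 0 a real number, R > 0, K ≥ 0, γ > 1, T > 0, and let δ ∈ {0, 1}. Suppose ρ, V : [0,T] × [0,∞) → ℝ are C¹ functions such that: (i) ρ(t,r) ≥ 0 for all t, r; (ii) ρ(t,r) = 0 and V(t,r) = 0 whenever r ≥ R; (iii) for each t the map r ↦ ρ(t,r)^{γ−1} is differentiable on (0,R), and for all t ∈ [0,T] and 0 < r < R: ∂ₜV(t,r) + V(t,r)·∂ᵣV(t,r) + (Kγ/(γ−1))·∂ᵣ(ρ(t,r)^{γ−1}) = δ·α(N)·r^{1−N}·∫₀^r ρ(t,s)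 s^{N−1} ds. Define H(t) := ∫₀^R r^n V(t,r) dr. Then H is differentiable on [0,T] and satisfies H′(t) ≥ n(n+1)·H(t)²/(2R^{n+2}) for all t ∈ [0,T]. -/
open Set MeasureTheory Filter Topology intervalIntegral


lemma alphaConst_nonneg (N : ℕ) : 0 ≤ alphaConst N := by
  unfold alphaConst
  split_ifs with h1 h2
  · norm_num
  · positivity
  · rcases Nat.eq_zero_or_pos N with h0 | hpos
    · subst h0; norm_num
    · have h3 : 3 ≤ N := by omega
      have h3' : (3:ℝ) ≤ (N:ℝ) := by exact_mod_cast h3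
      apply div_nonneg
      · exact mul_nonneg (mul_nonneg (by linarith) (by linarith))
          (Real.rpow_nonneg Real.pi_pos.le _)
      · exact (Real.Gamma_pos_of_pos (by positivity)).le

set_option maxHeartbeats 1000000

/-- For a radially symmetric `C¹` solution of the Euler (`δ = 0`) or repulsive
Euler–Poisson (`δ = 1`) equations, compactly supported in `[0,R]`, the functional
`H(t) = ∫₀^R rⁿ V(t,r) dr` is differentiable on `[0,T]` and satisfies the Riccati
differential inequality `H′(t) ≥ n(n+1)H(t)²/(2R^{n+2})`. -/
theorem riccati_inequality_repulsive
    (N : ℕ) (hN : 1 ≤ N) (n R K γ T δ : ℝ)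
    (hn : 0 < n) (hR : 0 < R) (hK : 0 ≤ K) (hγ : 1 < γ) (hT : 0 < T)
    (hδ : δ = 0 ∨ δ = 1)
    (ρ V : ℝ → ℝ → ℝ)
    (hρC1 : ContDiffOn ℝ 1 (Function.uncurry ρ) (Set.Icc 0 T ×ˢ Set.Ici 0))
    (hVC1 : ContDiffOn ℝ 1 (Function.uncurry V) (Set.Icc 0 T ×ˢ Set.Ici 0))
    (hρnn : ∀ t r, 0 ≤ ρ t r)
    (hsupp : ∀ t r, R ≤ r → ρ t r = 0 ∧ V t r = 0)
    (hdiffp : ∀ t ∈ Set.Icc (0:ℝ) T, ∀ r ∈ Set.Ioo (0:ℝ) R,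
      DifferentiableAt ℝ (fun s => ρ t s ^ (γ - 1)) r)
    (hmom : ∀ t ∈ Set.Icc (0:ℝ) T, ∀ r ∈ Set.Ioo (0:ℝ) R,
      deriv (fun τ => V τ r) t + V t r * deriv (fun s => V t s) r
        + (K * γ / (γ - 1)) * deriv (fun s => ρ t s ^ (γ - 1)) r
      = δ * alphaConst N * r ^ ((1:ℝ) - N) * ∫ s in (0:ℝ)..r, ρ t s * s ^ (N - 1)) :
    DifferentiableOn ℝ (fun t => ∫ r in (0:ℝ)..R, r ^ n * V t r) (Set.Icc 0 T) ∧
    ∀ t ∈ Set.Icc (0:ℝ) T,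
      n * (n + 1) * (∫ r in (0:ℝ)..R, r ^ n * V t r) ^ 2 / (2 * R ^ (n + 2))
      ≤ derivWithin (fun t => ∫ r in (0:ℝ)..R, r ^ n * V t r) (Set.Icc 0 T) t := by
  have hδ0 : 0 ≤ δ := by rcases hδ with h | h <;> norm_num [h]
  set SS : Set (ℝ × ℝ) := Set.Icc 0 T ×ˢ Set.Ici 0 with hSS
  have hSconv : Convex ℝ SS := (convex_Icc _ _).prod (convex_Ici _)
  have hSint : interior SS = Set.Ioo 0 T ×ˢ Set.Ioi 0 := by
    rw [hSS, interior_prod_eq, interior_Icc, interior_Ici]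
  have hSuniq : UniqueDiffOn ℝ SS := by
    apply uniqueDiffOn_convex hSconv
    rw [hSint]
    exact (nonempty_Ioo.2 hT).prod (nonempty_Ioi)
  -- partial derivatives
  set Wf : ℝ → ℝ → ℝ := fun t r =>
    fderivWithin ℝ (Function.uncurry V) SS (t, r) (1, 0) with hWf
  set Zf : ℝ → ℝ → ℝ := fun t r =>
    fderivWithin ℝ (Function.uncurry V) SS (t, r) (0, 1) with hZf
  have hfd : ContinuousOn (fun p => fderivWithin ℝ (Function.uncurry V) SS p) SS :=
    hVC1.continuousOn_fderivWithin hSuniq le_rfl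
  have hWcont : ContinuousOn (fun p : ℝ × ℝ => Wf p.1 p.2) SS :=
    (ContinuousLinearMap.apply ℝ ℝ ((1:ℝ), (0:ℝ))).continuous.comp_continuousOn hfd
  have hZcont : ContinuousOn (fun p : ℝ × ℝ => Zf p.1 p.2) SS :=
    (ContinuousLinearMap.apply ℝ ℝ ((0:ℝ), (1:ℝ))).continuous.comp_continuousOn hfd
  have hVcont : ContinuousOn (Function.uncurry V) SS := hVC1.continuousOn
  have hρcont : ContinuousOn (Function.uncurry ρ) SS := hρC1.continuousOn
  -- interior differentiability of slices
  have hFD : ∀ t ∈ Set.Ioo (0:ℝ) T, ∀ r ∈ Set.Ioi (0:ℝ),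
      HasFDerivAt (Function.uncurry V) (fderivWithin ℝ (Function.uncurry V) SS (t, r)) (t, r) := by
    intro t ht r hr
    have hmem : (t, r) ∈ interior SS := by rw [hSint]; exact ⟨ht, hr⟩
    exact ((hVC1.differentiableOn one_ne_zero) (t, r)
      (interior_subset hmem)).hasFDerivWithinAt.hasFDerivAt
      (mem_interior_iff_mem_nhds.1 hmem)
  have htderiv : ∀ t ∈ Set.Ioo (0:ℝ) T, ∀ r ∈ Set.Ioi (0:ℝ),
      HasDerivAt (fun τ => V τ r) (Wf t r) t := by
    intro t ht r hr
    have h1 : HasDerivAt (fun τ : ℝ => (τ, r)) ((1:ℝ), (0:ℝ)) t :=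
      (hasDerivAt_id t).prodMk (hasDerivAt_const t r)
    exact (hFD t ht r hr).comp_hasDerivAt t h1
  have hrderiv : ∀ t ∈ Set.Ioo (0:ℝ) T, ∀ r ∈ Set.Ioi (0:ℝ),
      HasDerivAt (fun s => V t s) (Zf t r) r := by
    intro t ht r hr
    have h1 : HasDerivAt (fun s : ℝ => (t, s)) ((0:ℝ), (1:ℝ)) r :=
      (hasDerivAt_const r t).prodMk (hasDerivAt_id r)
    exact (hFD t ht r hr).comp_hasDerivAt r h1
  -- compact box and bounds
  have hKcS : Set.Icc (0:ℝ) T ×ˢ Set.Icc (0:ℝ) R ⊆ SS :=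
    Set.prod_mono le_rfl Icc_subset_Ici_self
  have hKcomp : IsCompact (Set.Icc (0:ℝ) T ×ˢ Set.Icc (0:ℝ) R) :=
    isCompact_Icc.prod isCompact_Icc
  obtain ⟨Mw, hMw⟩ := hKcomp.exists_bound_of_continuousOn (hWcont.mono hKcS)
  obtain ⟨Mv, hMv⟩ := hKcomp.exists_bound_of_continuousOn (hVcont.mono hKcS)
  obtain ⟨Mp, hMp⟩ := hKcomp.exists_bound_of_continuousOn (hρcont.mono hKcS)
  -- slices
  have hmemS : ∀ t ∈ Set.Icc (0:ℝ) T, ∀ r ∈ Set.Icc (0:ℝ) R, (t, r) ∈ SS :=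
    fun t ht r hr => ⟨ht, hr.1⟩
  have hVt : ∀ t ∈ Set.Icc (0:ℝ) T, ContinuousOn (fun r => V t r) (Set.Icc 0 R) := by
    intro t ht
    exact hVcont.comp ((continuous_const.prodMk continuous_id).continuousOn)
      (fun r hr => hmemS t ht r hr)
  have hWt : ∀ t ∈ Set.Icc (0:ℝ) T, ContinuousOn (fun r => Wf t r) (Set.Icc 0 R) := by
    intro t ht
    exact hWcont.comp ((continuous_const.prodMk continuous_id).continuousOn)
      (fun r hr => hmemS t ht r hr)
  have hZt : ∀ t ∈ Set.Icc (0:ℝ) T, ContinuousOn (fun r => Zf t r) (Set.Icc 0 R) := by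
    intro t ht
    exact hZcont.comp ((continuous_const.prodMk continuous_id).continuousOn)
      (fun r hr => hmemS t ht r hr)
  have hρt : ∀ t ∈ Set.Icc (0:ℝ) T, ContinuousOn (fun r => ρ t r) (Set.Icc 0 R) := by
    intro t ht
    exact hρcont.comp ((continuous_const.prodMk continuous_id).continuousOn)
      (fun r hr => hmemS t ht r hr)
  have hrpowc : Continuous fun r : ℝ => r ^ n := by
    rw [continuous_iff_continuousAt]
    exact fun x => Real.continuousAt_rpow_const x n (Or.inr hn.le)
  set H : ℝ → ℝ := fun t => ∫ r in (0:ℝ)..R, r ^ n * V t r with hH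
  set g : ℝ → ℝ := fun t => ∫ r in (0:ℝ)..R, r ^ n * Wf t r with hg
  have hM0 : ∀ M : ℝ, (∀ p ∈ Set.Icc (0:ℝ) T ×ˢ Set.Icc (0:ℝ) R, ‖(0:ℝ)‖ ≤ M) → True := fun _ _ => trivial
  have paramCont : ∀ F : ℝ → ℝ → ℝ, ContinuousOn (fun p : ℝ × ℝ => F p.1 p.2) SS →
      ContinuousOn (fun t => ∫ r in (0:ℝ)..R, r ^ n * F t r) (Set.Icc 0 T) := by
    intro F hF
    obtain ⟨M, hM⟩ := hKcomp.exists_bound_of_continuousOn (hF.mono hKcS)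
    have hMnn : 0 ≤ M :=
      le_trans (norm_nonneg _) (hM (0, 0) ⟨left_mem_Icc.2 hT.le, left_mem_Icc.2 hR.le⟩)
    have hFt : ∀ t ∈ Set.Icc (0:ℝ) T, ContinuousOn (fun r => F t r) (Set.Icc 0 R) := by
      intro t ht
      exact hF.comp ((continuous_const.prodMk continuous_id).continuousOn)
        (fun r hr => hmemS t ht r hr)
    simp only [intervalIntegral.integral_of_le hR.le]
    apply MeasureTheory.continuousOn_of_dominated
      (bound := fun _ : ℝ => R ^ n * M)
    · intro t ht
      exact ((hrpowc.continuousOn.mul ((hFt t ht).mono Ioc_subset_Icc_self)).aestronglyMeasurable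
        measurableSet_Ioc)
    · intro t ht
      refine (ae_restrict_mem measurableSet_Ioc).mono fun r hr => ?_
      have h1 : |r ^ n| = r ^ n := abs_of_nonneg (Real.rpow_nonneg hr.1.le n)
      have h2 : r ^ n ≤ R ^ n := Real.rpow_le_rpow hr.1.le hr.2 hn.le
      have h3 : ‖F t r‖ ≤ M := hM (t, r) ⟨ht, ⟨hr.1.le, hr.2⟩⟩
      calc ‖r ^ n * F t r‖ = |r ^ n| * ‖F t r‖ := by
              rw [Real.norm_eq_abs, abs_mul]; rfl
        _ ≤ R ^ n * M := by
              rw [h1]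
              exact mul_le_mul h2 h3 (norm_nonneg _) (Real.rpow_nonneg hR.le n)
    · exact integrable_const _
    · refine (ae_restrict_mem measurableSet_Ioc).mono fun r hr => ?_
      exact continuous_const.continuousOn.mul
        (hF.comp ((continuous_id.prodMk continuous_const).continuousOn)
          (fun τ hτ => ⟨hτ, hr.1.le⟩))
  -- continuity of H and g on [0,T]
  have Hcont : ContinuousOn H (Set.Icc 0 T) := paramCont V hVcont
  have gcont : ContinuousOn g (Set.Icc 0 T) := paramCont Wf hWcont
  -- differentiation under the integral at interior points
  have hMwnn : 0 ≤ Mw :=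
    le_trans (norm_nonneg _) (hMw (0, 0) ⟨left_mem_Icc.2 hT.le, left_mem_Icc.2 hR.le⟩)
  have hHg : ∀ t ∈ Set.Ioo (0:ℝ) T, HasDerivAt H (g t) t := by
    intro t ht
    have hε : 0 < min t (T - t) := lt_min ht.1 (by linarith [ht.2])
    have hball : Metric.ball t (min t (T - t)) ⊆ Set.Ioo (0:ℝ) T := by
      intro x hx
      rw [Metric.mem_ball, Real.dist_eq, abs_lt] at hx
      constructor
      · have h1 := hx.1; have h2 := min_le_left t (T - t); linarith
      · have h1 := hx.2; have h2 := min_le_right t (T - t); linarith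
    have hmeas : ∀ x ∈ Set.Ioo (0:ℝ) T,
        AEStronglyMeasurable (fun r => r ^ n * V x r)
          (MeasureTheory.volume.restrict (Set.uIoc (0:ℝ) R)) := by
      intro x hx
      rw [Set.uIoc_of_le hR.le]
      exact ((hrpowc.continuousOn.mul
        (((hVt x (Set.mem_Icc_of_Ioo hx)).mono Ioc_subset_Icc_self))).aestronglyMeasurable
        measurableSet_Ioc)
    have hmeas' :
        AEStronglyMeasurable (fun r => r ^ n * Wf t r)
          (MeasureTheory.volume.restrict (Set.uIoc (0:ℝ) R)) := by
      rw [Set.uIoc_of_le hR.le]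
      exact ((hrpowc.continuousOn.mul
        (((hWt t (Set.mem_Icc_of_Ioo ht)).mono Ioc_subset_Icc_self))).aestronglyMeasurable
        measurableSet_Ioc)
    have hint : IntervalIntegrable (fun r => r ^ n * V t r) MeasureTheory.volume 0 R := by
      apply ContinuousOn.intervalIntegrable
      rw [Set.uIcc_of_le hR.le]
      exact hrpowc.continuousOn.mul (hVt t (Set.mem_Icc_of_Ioo ht))
    have hbnd : ∀ᵐ r ∂MeasureTheory.volume, r ∈ Set.uIoc (0:ℝ) R →
        ∀ x ∈ Metric.ball t (min t (T - t)), ‖r ^ n * Wf x r‖ ≤ R ^ n * Mw := by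
      refine Filter.Eventually.of_forall fun r hr x hx => ?_
      rw [Set.uIoc_of_le hR.le] at hr
      have h1 : |r ^ n| = r ^ n := abs_of_nonneg (Real.rpow_nonneg hr.1.le n)
      have h2 : r ^ n ≤ R ^ n := Real.rpow_le_rpow hr.1.le hr.2 hn.le
      have h3 : ‖Wf x r‖ ≤ Mw :=
        hMw (x, r) ⟨Set.mem_Icc_of_Ioo (hball hx), ⟨hr.1.le, hr.2⟩⟩
      calc ‖r ^ n * Wf x r‖ = |r ^ n| * ‖Wf x r‖ := by
              rw [Real.norm_eq_abs, abs_mul]; rfl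
        _ ≤ R ^ n * Mw := by
              rw [h1]
              exact mul_le_mul h2 h3 (norm_nonneg _) (Real.rpow_nonneg hR.le n)
    have hdiff : ∀ᵐ r ∂MeasureTheory.volume, r ∈ Set.uIoc (0:ℝ) R →
        ∀ x ∈ Metric.ball t (min t (T - t)),
          HasDerivAt (fun x => r ^ n * V x r) (r ^ n * Wf x r) x := by
      refine Filter.Eventually.of_forall fun r hr x hx => ?_
      rw [Set.uIoc_of_le hR.le] at hr
      exact (htderiv x (hball hx) r hr.1).const_mul _
    have key := (intervalIntegral.hasDerivAt_integral_of_dominated_loc_of_deriv_le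
      (μ := MeasureTheory.volume) (F := fun x r => r ^ n * V x r)
      (F' := fun x r => r ^ n * Wf x r) (bound := fun _ => R ^ n * Mw)
      (a := 0) (b := R) (x₀ := t) (Metric.ball_mem_nhds t hε)
      (Filter.eventually_of_mem (isOpen_Ioo.mem_nhds ht) hmeas) hint hmeas' hbnd
      intervalIntegrable_const hdiff).2
    exact key
  -- the key interior inequality
  have hkeyineq : ∀ t ∈ Set.Ioo (0:ℝ) T,
      n * (n + 1) * (H t) ^ 2 / (2 * R ^ (n + 2)) ≤ g t := by
    intro t ht
    have tI : t ∈ Set.Icc (0:ℝ) T := Set.mem_Icc_of_Ioo ht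
    have hMpnn : 0 ≤ Mp :=
      le_trans (norm_nonneg _) (hMp (0, 0) ⟨left_mem_Icc.2 hT.le, left_mem_Icc.2 hR.le⟩)
    set c : ℝ := K * γ / (γ - 1) with hcdef
    have hc : 0 ≤ c := div_nonneg (mul_nonneg hK (by linarith)) (by linarith)
    set aδ : ℝ := δ * alphaConst N with haδdef
    have haδ : 0 ≤ aδ := mul_nonneg hδ0 (alphaConst_nonneg N)
    set Iρ : ℝ → ℝ := fun r => ∫ s in (0:ℝ)..r, ρ t s * s ^ (N - 1) with hIρdef
    set A : ℝ → ℝ := fun r => r ^ n * Wf t r with hAdef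
    set B : ℝ → ℝ := fun r => r ^ n * (V t r * Zf t r) with hBdef
    set fδ : ℝ → ℝ := fun r => r ^ n * (aδ * r ^ ((1:ℝ) - N) * Iρ r) with hfδdef
    set D : ℝ → ℝ := fun r => r ^ n * deriv (fun s => ρ t s ^ (γ - 1)) r with hDdef
    set J : ℝ := ∫ r in (0:ℝ)..R, r ^ (n - 1) * (V t r) ^ 2 with hJdef
    -- pointwise identity from the momentum equation
    have hpt : ∀ r ∈ Set.Ioo (0:ℝ) R, A r = -B r - c * D r + fδ r := by
      intro r hr
      have h := hmom t tI r hr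
      have e1 : deriv (fun τ => V τ r) t = Wf t r := (htderiv t ht r hr.1).deriv
      have e2 : deriv (fun s => V t s) r = Zf t r := (hrderiv t ht r hr.1).deriv
      rw [e1, e2] at h
      simp only [hAdef, hBdef, hDdef, hfδdef, hIρdef]
      have h' : Wf t r = -(V t r * Zf t r) - c * deriv (fun s => ρ t s ^ (γ - 1)) r
          + aδ * r ^ ((1:ℝ) - (N:ℝ)) * ∫ s in (0:ℝ)..r, ρ t s * s ^ (N - 1) := by
        linarith [h]
      rw [h']
      ring
    -- integrability facts
    have hiA : IntervalIntegrable A MeasureTheory.volume 0 R := by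
      apply ContinuousOn.intervalIntegrable
      rw [Set.uIcc_of_le hR.le]
      exact hrpowc.continuousOn.mul (hWt t tI)
    have hiB : IntervalIntegrable B MeasureTheory.volume 0 R := by
      apply ContinuousOn.intervalIntegrable
      rw [Set.uIcc_of_le hR.le]
      exact hrpowc.continuousOn.mul ((hVt t tI).mul (hZt t tI))
    have hipow : IntervalIntegrable (fun r => r ^ (n - 1)) MeasureTheory.volume 0 R :=
      intervalIntegral.intervalIntegrable_rpow' (by linarith)
    have hiJ : IntervalIntegrable (fun r => r ^ (n - 1) * (V t r) ^ 2)
        MeasureTheory.volume 0 R := by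
      apply hipow.mul_continuousOn
      rw [Set.uIcc_of_le hR.le]
      exact (hVt t tI).pow 2
    have hψcont : ContinuousOn (fun r => ρ t r ^ (γ - 1)) (Set.Icc 0 R) :=
      (hρt t tI).rpow_const (fun x _ => Or.inr (by linarith))
    have hiψ : IntervalIntegrable (fun r => r ^ (n - 1) * (ρ t r ^ (γ - 1)))
        MeasureTheory.volume 0 R := by
      apply hipow.mul_continuousOn
      rw [Set.uIcc_of_le hR.le]
      exact hψcont
    have hIρcont : ContinuousOn Iρ (Set.Icc 0 R) := by
      have hint : IntegrableOn (fun s => ρ t s * s ^ (N - 1)) (Set.uIcc (0:ℝ) R) := by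
        rw [Set.uIcc_of_le hR.le]
        exact ((hρt t tI).mul (continuous_pow _).continuousOn).integrableOn_Icc
      have := intervalIntegral.continuousOn_primitive_interval hint
      rwa [Set.uIcc_of_le hR.le] at this
    have hIρnn : ∀ r ∈ Set.Icc (0:ℝ) R, 0 ≤ Iρ r := by
      intro r hr
      exact intervalIntegral.integral_nonneg hr.1
        (fun s hs => mul_nonneg (hρnn t s) (pow_nonneg hs.1 _))
    have hIρle : ∀ r ∈ Set.Icc (0:ℝ) R, Iρ r ≤ Mp * r ^ N := by
      intro r hr
      have hi1 : IntervalIntegrable (fun s => ρ t s * s ^ (N - 1))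
          MeasureTheory.volume 0 r := by
        apply ContinuousOn.intervalIntegrable
        rw [Set.uIcc_of_le hr.1]
        exact ((hρt t tI).mono (Icc_subset_Icc le_rfl hr.2)).mul (continuous_pow _).continuousOn
      have hi2 : IntervalIntegrable (fun s => Mp * s ^ (N - 1))
          MeasureTheory.volume 0 r :=
        (continuous_const.mul (continuous_pow _)).intervalIntegrable _ _
      have hle : Iρ r ≤ ∫ s in (0:ℝ)..r, Mp * s ^ (N - 1) := by
        apply intervalIntegral.integral_mono_on hr.1 hi1 hi2
        intro s hs
        have hsle : ρ t s ≤ Mp := by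
          have := hMp (t, s) ⟨tI, ⟨hs.1, le_trans hs.2 hr.2⟩⟩
          simp only [Function.uncurry_apply_pair, Real.norm_eq_abs,
            abs_of_nonneg (hρnn t s)] at this
          exact this
        exact mul_le_mul_of_nonneg_right hsle (pow_nonneg hs.1 _)
      have heval : ∫ s in (0:ℝ)..r, Mp * s ^ (N - 1) = Mp * (r ^ N / N) := by
        rw [intervalIntegral.integral_const_mul, integral_pow]
        have hN1 : N - 1 + 1 = N := Nat.succ_pred_eq_of_pos hN
        rw [hN1]
        rw [zero_pow (by omega : N ≠ 0)]
        have hcast : ((N - 1 : ℕ) : ℝ) + 1 = (N:ℝ) := by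
          exact_mod_cast congrArg (Nat.cast : ℕ → ℝ) (Nat.succ_pred_eq_of_pos hN)
        rw [hcast]
        ring
      have hNc : (1:ℝ) ≤ (N:ℝ) := by exact_mod_cast hN
      have : Mp * (r ^ N / N) ≤ Mp * r ^ N := by
        apply mul_le_mul_of_nonneg_left _ hMpnn
        apply div_le_self (pow_nonneg hr.1 _) hNc
      linarith [hle, heval ▸ hle]
    have hfδnn : ∀ r ∈ Set.Icc (0:ℝ) R, 0 ≤ fδ r := by
      intro r hr
      exact mul_nonneg (Real.rpow_nonneg hr.1 _)
        (mul_nonneg (mul_nonneg haδ (Real.rpow_nonneg hr.1 _)) (hIρnn r hr))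
    have hifδ : IntervalIntegrable fδ MeasureTheory.volume 0 R := by
      rw [intervalIntegrable_iff_integrableOn_Ioc_of_le hR.le]
      have hfδcont : ContinuousOn fδ (Set.Ioc 0 R) := by
        apply (hrpowc.continuousOn).mul
        apply ContinuousOn.mul
        · apply continuousOn_const.mul
          intro x hx
          exact (Real.continuousAt_rpow_const x _ (Or.inl hx.1.ne')).continuousWithinAt
        · exact hIρcont.mono Ioc_subset_Icc_self
      have hgint : IntegrableOn (fun r : ℝ => aδ * Mp * R ^ n * r) (Set.Ioc 0 R)
          MeasureTheory.volume := by
        rw [← intervalIntegrable_iff_integrableOn_Ioc_of_le hR.le]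
        exact (continuous_const.mul continuous_id).intervalIntegrable _ _
      apply hgint.mono' (hfδcont.aestronglyMeasurable measurableSet_Ioc)
      refine (ae_restrict_mem measurableSet_Ioc).mono fun r hr => ?_
      have hrI : r ∈ Set.Icc (0:ℝ) R := ⟨hr.1.le, hr.2⟩
      rw [Real.norm_eq_abs, abs_of_nonneg (hfδnn r hrI)]
      have hkey : r ^ ((1:ℝ) - (N:ℝ)) * (r:ℝ) ^ (N:ℕ) = r := by
        rw [← Real.rpow_natCast r N, ← Real.rpow_add hr.1]
        norm_num
      have h1 : r ^ n ≤ R ^ n := Real.rpow_le_rpow hr.1.le hr.2 hn.le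
      have h2 : aδ * r ^ ((1:ℝ) - (N:ℝ)) * Iρ r
          ≤ aδ * r ^ ((1:ℝ) - (N:ℝ)) * (Mp * r ^ N) := by
        apply mul_le_mul_of_nonneg_left (hIρle r hrI)
        exact mul_nonneg haδ (Real.rpow_nonneg hr.1.le _)
      have h3 : (0:ℝ) ≤ aδ * r ^ ((1:ℝ) - (N:ℝ)) * Iρ r :=
        mul_nonneg (mul_nonneg haδ (Real.rpow_nonneg hr.1.le _)) (hIρnn r hrI)
      calc fδ r ≤ R ^ n * (aδ * r ^ ((1:ℝ) - (N:ℝ)) * (Mp * r ^ N)) := by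
            simp only [hfδdef]
            exact mul_le_mul h1 h2 h3 (Real.rpow_nonneg hR.le _)
        _ = aδ * Mp * R ^ n * (r ^ ((1:ℝ) - (N:ℝ)) * (r:ℝ) ^ (N:ℕ)) := by ring
        _ = aδ * Mp * R ^ n * r := by rw [hkey]
    have hfδI : 0 ≤ ∫ r in (0:ℝ)..R, fδ r :=
      intervalIntegral.integral_nonneg hR.le hfδnn
    have hJnn : 0 ≤ J :=
      intervalIntegral.integral_nonneg hR.le
        (fun r hr => mul_nonneg (Real.rpow_nonneg hr.1 _) (sq_nonneg _))
    -- integration by parts for the transport term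
    have hiterm1 : IntervalIntegrable (fun r => n * (r ^ (n - 1) * (V t r) ^ 2) / 2)
        MeasureTheory.volume 0 R := (hiJ.const_mul n).div_const 2
    have hBval : ∫ r in (0:ℝ)..R, B r = -(n / 2 * J) := by
      have hEA : ∫ r in (0:ℝ)..R, (n * (r ^ (n - 1) * (V t r) ^ 2) / 2 + B r) = 0 := by
        have hcont : ContinuousOn (fun r => r ^ n * (V t r) ^ 2 / 2) (Set.Icc 0 R) :=
          (hrpowc.continuousOn.mul ((hVt t tI).pow 2)).div_const 2
        have hderiv : ∀ r ∈ Set.Ioo (0:ℝ) R,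
            HasDerivAt (fun r => r ^ n * (V t r) ^ 2 / 2)
              (n * (r ^ (n - 1) * (V t r) ^ 2) / 2 + B r) r := by
          intro r hr
          have h1 : HasDerivAt (fun r : ℝ => r ^ n) (n * r ^ (n - 1)) r :=
            Real.hasDerivAt_rpow_const (Or.inl hr.1.ne')
          have h2 : HasDerivAt (fun s => V t s) (Zf t r) r := hrderiv t ht r hr.1
          have h3 := (h1.mul (h2.pow 2)).div_const 2
          refine h3.congr_deriv ?_
          show (n * r ^ (n - 1) * V t r ^ 2 + r ^ n * (((2:ℕ):ℝ) * V t r ^ (2 - 1) * Zf t r)) / 2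
            = n * (r ^ (n - 1) * V t r ^ 2) / 2 + r ^ n * (V t r * Zf t r)
          ring
        have := intervalIntegral.integral_eq_sub_of_hasDerivAt_of_le hR.le hcont hderiv
          (hiterm1.add hiB)
        rw [this, (hsupp t R le_rfl).2, Real.zero_rpow hn.ne']
        ring
      rw [intervalIntegral.integral_add hiterm1 hiB] at hEA
      have h4 : ∫ r in (0:ℝ)..R, n * (r ^ (n - 1) * (V t r) ^ 2) / 2 = n / 2 * J := by
        rw [intervalIntegral.integral_div, intervalIntegral.integral_const_mul]
        simp only [hJdef]
        ring
      linarith [hEA, h4]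
    -- the core lower bound on g t
    have hne : ∀ᵐ (x:ℝ) ∂MeasureTheory.volume, x ≠ R := by
      rw [ae_iff]
      simp only [ne_eq, not_not, Set.setOf_eq_eq_singleton]
      exact Real.volume_singleton
    have haemain : ∀ᵐ x ∂MeasureTheory.volume, x ∈ Set.uIoc (0:ℝ) R →
        A x = -B x - c * D x + fδ x := by
      filter_upwards [hne] with x hx hxI
      rw [Set.uIoc_of_le hR.le] at hxI
      exact hpt x ⟨hxI.1, lt_of_le_of_ne hxI.2 hx⟩
    have hgA : g t = ∫ r in (0:ℝ)..R, A r := by simp only [hg, hAdef]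
    have hgJ : n / 2 * J ≤ g t := by
      rcases eq_or_lt_of_le hc with hc0 | hcpos
      · -- no pressure
        have haemain' : ∀ᵐ x ∂MeasureTheory.volume, x ∈ Set.uIoc (0:ℝ) R →
            A x = -B x + fδ x := by
          filter_upwards [haemain] with x hx hxI
          have := hx hxI
          rw [← hc0] at this
          linarith [this]
        have hiBneg : IntervalIntegrable (fun r => -B r) MeasureTheory.volume 0 R := hiB.neg
        rw [hgA, intervalIntegral.integral_congr_ae haemain',
          intervalIntegral.integral_add hiBneg hifδ, intervalIntegral.integral_neg, hBval]
        linarith [hfδI]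
      · -- with pressure
        have hcne : c ≠ 0 := hcpos.ne'
        have hiD : IntervalIntegrable D MeasureTheory.volume 0 R := by
          rw [intervalIntegrable_iff_integrableOn_Ioc_of_le hR.le]
          have h6 : IntegrableOn (fun r => c⁻¹ * (fδ r - A r - B r)) (Set.Ioc 0 R)
              MeasureTheory.volume := by
            rw [← intervalIntegrable_iff_integrableOn_Ioc_of_le hR.le]
            exact ((hifδ.sub hiA).sub hiB).const_mul _
          apply h6.congr
          filter_upwards [ae_restrict_mem measurableSet_Ioc, ae_restrict_of_ae hne]
            with x hxI hxne
          have hxoo : x ∈ Set.Ioo (0:ℝ) R := ⟨hxI.1, lt_of_le_of_ne hxI.2 hxne⟩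
          have h := hpt x hxoo
          have h' : fδ x - A x - B x = c * D x := by linarith
          rw [h']
          field_simp
        -- integration by parts for the pressure term
        have hiterm2 : IntervalIntegrable (fun r => n * (r ^ (n - 1) * (ρ t r ^ (γ - 1))))
            MeasureTheory.volume 0 R := hiψ.const_mul n
        have hEP : ∫ r in (0:ℝ)..R,
            (n * (r ^ (n - 1) * (ρ t r ^ (γ - 1))) + D r) = 0 := by
          have hcont : ContinuousOn (fun r => r ^ n * (ρ t r ^ (γ - 1))) (Set.Icc 0 R) :=
            hrpowc.continuousOn.mul hψcont
          have hderiv : ∀ r ∈ Set.Ioo (0:ℝ) R,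
              HasDerivAt (fun r => r ^ n * (ρ t r ^ (γ - 1)))
                (n * (r ^ (n - 1) * (ρ t r ^ (γ - 1))) + D r) r := by
            intro r hr
            have h1 : HasDerivAt (fun r : ℝ => r ^ n) (n * r ^ (n - 1)) r :=
              Real.hasDerivAt_rpow_const (Or.inl hr.1.ne')
            have h2 := (hdiffp t tI r hr).hasDerivAt
            have h3 := h1.mul h2
            refine h3.congr_deriv ?_
            show _ = n * (r ^ (n - 1) * (ρ t r ^ (γ - 1)))
              + r ^ n * deriv (fun s => ρ t s ^ (γ - 1)) r
            ring
          have := intervalIntegral.integral_eq_sub_of_hasDerivAt_of_le hR.le hcont hderiv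
            (hiterm2.add hiD)
          rw [this, (hsupp t R le_rfl).1, Real.zero_rpow (by linarith : γ - 1 ≠ 0),
            Real.zero_rpow hn.ne']
          ring
        set P : ℝ := ∫ r in (0:ℝ)..R, r ^ (n - 1) * (ρ t r ^ (γ - 1)) with hPdef
        have hPnn : 0 ≤ P :=
          intervalIntegral.integral_nonneg hR.le
            (fun r hr => mul_nonneg (Real.rpow_nonneg hr.1 _) (Real.rpow_nonneg (hρnn t r) _))
        have hDval : ∫ r in (0:ℝ)..R, D r = -(n * P) := by
          rw [intervalIntegral.integral_add hiterm2 hiD] at hEP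
          have h5 : ∫ r in (0:ℝ)..R, n * (r ^ (n - 1) * (ρ t r ^ (γ - 1))) = n * P := by
            rw [intervalIntegral.integral_const_mul]
          linarith [hEP, h5]
        have hiBneg2 : IntervalIntegrable (fun r => -B r) MeasureTheory.volume 0 R := hiB.neg
        have hiBD : IntervalIntegrable (fun r => -B r - c * D r) MeasureTheory.volume 0 R :=
          hiBneg2.sub (hiD.const_mul c)
        have hsplit : g t = -(∫ r in (0:ℝ)..R, B r) - c * (∫ r in (0:ℝ)..R, D r)
            + ∫ r in (0:ℝ)..R, fδ r := by
          rw [hgA, intervalIntegral.integral_congr_ae haemain,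
            intervalIntegral.integral_add hiBD hifδ,
            intervalIntegral.integral_sub hiBneg2 (hiD.const_mul c),
            intervalIntegral.integral_neg, intervalIntegral.integral_const_mul]
        rw [hsplit, hBval, hDval]
        have := mul_nonneg (mul_nonneg hcpos.le hn.le) hPnn
        nlinarith [hfδI]
    -- Cauchy-Schwarz
    have hCS : (n + 2) * (H t) ^ 2 ≤ R ^ (n + 2) * J := by
      have hRp : (0:ℝ) < R ^ (n + 2) := Real.rpow_pos_of_pos hR _
      set lam : ℝ := (n + 2) * |H t| / R ^ (n + 2) with hlamdef
      have hlamnn : 0 ≤ lam := by positivity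
      have hpw : ∀ r ∈ Set.Icc (0:ℝ) R,
          2 * lam * |r ^ n * V t r| ≤ lam ^ 2 * r ^ (n + 1) + r ^ (n - 1) * (V t r) ^ 2 := by
        intro r hr
        rcases eq_or_lt_of_le hr.1 with h0 | h0
        · rw [← h0, Real.zero_rpow hn.ne', Real.zero_rpow (by linarith : n + 1 ≠ 0)]
          simp only [zero_mul, abs_zero, mul_zero, zero_add]
          positivity
        · have hq : (0:ℝ) < r ^ (n - 1) := Real.rpow_pos_of_pos h0 _
          have e1 : r ^ n = r ^ (n - 1) * r := by
            have h1 := Real.rpow_add_one h0.ne' (n - 1)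
            rw [show n - 1 + 1 = n by ring] at h1
            exact h1
          have e2 : r ^ (n + 1) = r ^ (n - 1) * r * r := by
            rw [Real.rpow_add_one h0.ne' n, e1]
          have habs : |r ^ n * V t r| = r ^ (n - 1) * r * |V t r| := by
            rw [abs_mul, abs_of_nonneg (Real.rpow_nonneg hr.1 n), e1]
          rw [habs, e2]
          have key : 2 * lam * (r * |V t r|) ≤ lam ^ 2 * (r * r) + (V t r) ^ 2 := by
            nlinarith [sq_nonneg (lam * r - |V t r|), sq_abs (V t r)]
          nlinarith [mul_le_mul_of_nonneg_left key hq.le]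
      have hiabs : IntervalIntegrable (fun r => 2 * lam * |r ^ n * V t r|)
          MeasureTheory.volume 0 R := by
        apply ContinuousOn.intervalIntegrable
        rw [Set.uIcc_of_le hR.le]
        exact continuousOn_const.mul ((hrpowc.continuousOn.mul (hVt t tI)).abs)
      have hirpow1 : IntervalIntegrable (fun r => lam ^ 2 * r ^ (n + 1))
          MeasureTheory.volume 0 R :=
        (intervalIntegral.intervalIntegrable_rpow' (by linarith)).const_mul _
      have hintineq : (∫ r in (0:ℝ)..R, 2 * lam * |r ^ n * V t r|)
          ≤ ∫ r in (0:ℝ)..R, (lam ^ 2 * r ^ (n + 1) + r ^ (n - 1) * (V t r) ^ 2) :=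
        intervalIntegral.integral_mono_on hR.le hiabs (hirpow1.add hiJ) hpw
      have hlhs : 2 * lam * |H t| ≤ ∫ r in (0:ℝ)..R, 2 * lam * |r ^ n * V t r| := by
        rw [intervalIntegral.integral_const_mul]
        apply mul_le_mul_of_nonneg_left _ (by positivity : (0:ℝ) ≤ 2 * lam)
        exact intervalIntegral.abs_integral_le_integral_abs hR.le
      have hrhs : (∫ r in (0:ℝ)..R, (lam ^ 2 * r ^ (n + 1) + r ^ (n - 1) * (V t r) ^ 2))
          = lam ^ 2 * (R ^ (n + 2) / (n + 2)) + J := by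
        rw [intervalIntegral.integral_add hirpow1 hiJ, intervalIntegral.integral_const_mul,
          integral_rpow (Or.inl (by linarith : (-1:ℝ) < n + 1)),
          Real.zero_rpow (by linarith : n + 1 + 1 ≠ 0),
          show n + 1 + 1 = n + 2 by ring]
        simp only [hJdef]
        ring
      have h8 : 2 * lam * |H t| ≤ lam ^ 2 * (R ^ (n + 2) / (n + 2)) + J := by
        rw [← hrhs]
        exact le_trans hlhs hintineq
      have hlam2 : lam ^ 2 = (n + 2) ^ 2 * (H t) ^ 2 / (R ^ (n + 2)) ^ 2 := by
        rw [hlamdef, div_pow, mul_pow, sq_abs]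
      have e6 : lam ^ 2 * (R ^ (n + 2) / (n + 2)) = (n + 2) * (H t) ^ 2 / R ^ (n + 2) := by
        rw [hlam2]
        field_simp
      have e7 : 2 * lam * |H t| = 2 * ((n + 2) * (H t) ^ 2 / R ^ (n + 2)) := by
        have h7' : lam * |H t| = (n + 2) * (H t) ^ 2 / R ^ (n + 2) := by
          rw [hlamdef, div_mul_eq_mul_div, mul_assoc, abs_mul_abs_self, ← sq]
        rw [mul_assoc, h7']
      rw [e7, e6] at h8
      have h10 : (n + 2) * (H t) ^ 2 / R ^ (n + 2) ≤ J := by linarith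
      rw [div_le_iff₀ hRp] at h10
      linarith [h10]
    have hRp : (0:ℝ) < R ^ (n + 2) := Real.rpow_pos_of_pos hR _
    rw [div_le_iff₀ (by positivity)]
    calc n * (n + 1) * (H t) ^ 2 ≤ n * ((n + 2) * (H t) ^ 2) := by
          nlinarith [sq_nonneg (H t)]
      _ ≤ n * (R ^ (n + 2) * J) := mul_le_mul_of_nonneg_left hCS hn.le
      _ = n / 2 * J * (2 * R ^ (n + 2)) := by ring
      _ ≤ g t * (2 * R ^ (n + 2)) := mul_le_mul_of_nonneg_right hgJ (by positivity)
  -- derivative within the closed interval everywhere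
  have hHdiffOn : DifferentiableOn ℝ H (Set.Ioo 0 T) := fun x hx =>
    (hHg x hx).differentiableAt.differentiableWithinAt
  have hderiveq : ∀ x ∈ Set.Ioo (0:ℝ) T, deriv H x = g x := fun x hx => (hHg x hx).deriv
  have hHW : ∀ t ∈ Set.Icc (0:ℝ) T, HasDerivWithinAt H (g t) (Set.Icc 0 T) t := by
    intro t ht
    rcases eq_or_lt_of_le ht.1 with h0 | h0
    · -- t = 0
      subst h0
      have hmemnhds : Set.Ioo (0:ℝ) T ∈ 𝓝[>] (0:ℝ) := Ioo_mem_nhdsGT hT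
      have hle : 𝓝[>] (0:ℝ) ≤ 𝓝[Set.Ioo (0:ℝ) T] (0:ℝ) := nhdsWithin_le_iff.2 hmemnhds
      have hgt : Tendsto g (𝓝[>] (0:ℝ)) (𝓝 (g 0)) :=
        (((gcont 0 ht).mono Ioo_subset_Icc_self).mono_left hle)
      have hdt : Tendsto (fun x => deriv H x) (𝓝[>] (0:ℝ)) (𝓝 (g 0)) :=
        hgt.congr' (Filter.eventually_of_mem hmemnhds fun x hx => (hderiveq x hx).symm)
      exact (hasDerivWithinAt_Ici_of_tendsto_deriv hHdiffOn
        ((Hcont 0 ht).mono Ioo_subset_Icc_self) hmemnhds hdt).mono Icc_subset_Ici_self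
    rcases eq_or_lt_of_le ht.2 with hTt | hTt
    · -- t = T
      subst hTt
      have hmemnhds : Set.Ioo (0:ℝ) t ∈ 𝓝[<] t := Ioo_mem_nhdsLT hT
      have hle : 𝓝[<] t ≤ 𝓝[Set.Ioo (0:ℝ) t] t := nhdsWithin_le_iff.2 hmemnhds
      have hgt : Tendsto g (𝓝[<] t) (𝓝 (g t)) :=
        (((gcont t ht).mono Ioo_subset_Icc_self).mono_left hle)
      have hdt : Tendsto (fun x => deriv H x) (𝓝[<] t) (𝓝 (g t)) :=
        hgt.congr' (Filter.eventually_of_mem hmemnhds fun x hx => (hderiveq x hx).symm)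
      exact (hasDerivWithinAt_Iic_of_tendsto_deriv hHdiffOn
        ((Hcont t ht).mono Ioo_subset_Icc_self) hmemnhds hdt).mono Icc_subset_Iic_self
    · exact (hHg t ⟨h0, hTt⟩).hasDerivWithinAt
  refine ⟨fun t ht => (hHW t ht).differentiableWithinAt, ?_⟩
  intro t ht
  have hdw : derivWithin H (Set.Icc 0 T) t = g t :=
    (hHW t ht).derivWithin ((uniqueDiffOn_Icc hT) t ht)
  rw [hdw]
  -- extend the interior inequality by continuity
  have hclos : t ∈ closure (Set.Ioo (0:ℝ) T) := by
    rw [closure_Ioo hT.ne]; exact ht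
  have hne : (𝓝[Set.Ioo (0:ℝ) T] t).NeBot := mem_closure_iff_nhdsWithin_neBot.1 hclos
  have hφcont : ContinuousOn (fun x => n * (n + 1) * (H x) ^ 2 / (2 * R ^ (n + 2)))
      (Set.Icc 0 T) := ((continuousOn_const.mul ((Hcont.pow 2))).div_const _)
  have h1 : Tendsto (fun x => n * (n + 1) * (H x) ^ 2 / (2 * R ^ (n + 2)))
      (𝓝[Set.Ioo (0:ℝ) T] t) (𝓝 (n * (n + 1) * (H t) ^ 2 / (2 * R ^ (n + 2)))) :=
    ((hφcont t ht).mono Ioo_subset_Icc_self)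
  have h2 : Tendsto g (𝓝[Set.Ioo (0:ℝ) T] t) (𝓝 (g t)) :=
    ((gcont t ht).mono Ioo_subset_Icc_self)
  exact le_of_tendsto_of_tendsto h1 h2 (eventually_nhdsWithin_of_forall fun x hx => hkeyineq x hx)
end
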